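/- Let 0 < p < 1/2, q = 1 − p, and for k ≥ 1 let A_k be the (k+1)×(k+1) strong-reflection matrix. Define Q_k(z) = det(B_k(z)) for k ≥ 1, where B_k(z) is the matrix I − z A_k with its first row (index 0) replaced by the all-ones row vector, and set Q_0(z) = 1 and Q_{−1}(z) = 0. Then for all k ≥ 1, Q_k(z) = Q_{k−1}(z) − p q z² Q_{k−2}(z) + p^{k−1} z^k. -/
import Mathlib


open Matrix BigOperators

/-- The `(k+1) × (k+1)` strong-reflection matrix: nonzero entries are
`A(0,1) = 1-p`, `A(1,0) = 1`, `A(i,i-1) = p` for `2 ≤ i ≤ k`,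
`A(i,i+1) = 1-p` for `1 ≤ i ≤ k-1`. -/
noncomputable def strongA (p : ℝ) (k : ℕ) : Matrix (Fin (k + 1)) (Fin (k + 1)) ℝ :=
  fun i j =>
    if (i : ℕ) = 0 ∧ (j : ℕ) = 1 then 1 - p
    else if (i : ℕ) = 1 ∧ (j : ℕ) = 0 then 1
    else if 2 ≤ (i : ℕ) ∧ (j : ℕ) + 1 = (i : ℕ) then p
    else if 1 ≤ (i : ℕ) ∧ (j : ℕ) = (i : ℕ) + 1 then 1 - p
    else 0

/-- Index-shifted sequence of numerators: `Qdet p z (k+1)` is the quantity `Q_k(z)`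
of the paper, namely `Q_{-1}(z) = 0`, `Q_0(z) = 1`, and for `k ≥ 1`,
`Q_k(z) = det B_k(z)` where `B_k(z)` is `I - z A_k` with first row replaced by ones. -/
noncomputable def Qdet (p z : ℝ) : ℕ → ℝ
  | 0 => 0
  | j + 1 =>
    if j = 0 then 1 else ((1 - z • strongA p j).updateRow 0 (fun _ => 1)).det


noncomputable def Bm (p z : ℝ) (k : ℕ) : Matrix (Fin (k + 1)) (Fin (k + 1)) ℝ :=
  ((1 : Matrix (Fin (k + 1)) (Fin (k + 1)) ℝ) - z • strongA p k).updateRow 0 (fun _ => 1)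

noncomputable def bent (p z : ℝ) (i j : ℕ) : ℝ :=
  if i = 0 then 1
  else if i = j then 1
  else if i = 1 ∧ j = 0 then -z
  else if j + 1 = i then -(p * z)
  else if j = i + 1 then -((1 - p) * z)
  else 0

lemma bent_row0 (p z : ℝ) (j : ℕ) : bent p z 0 j = 1 := by simp [bent]

lemma bent_diag (p z : ℝ) {i j : ℕ} (h0 : i ≠ 0) (h : i = j) : bent p z i j = 1 := by
  simp only [bent]; split_ifs <;> first | rfl | omega

lemma bent_sub1 (p z : ℝ) {i j : ℕ} (hi : i = 1) (hj : j = 0) : bent p z i j = -z := by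
  simp only [bent]; split_ifs <;> first | rfl | omega

lemma bent_subp (p z : ℝ) {i j : ℕ} (h : j + 1 = i) (h2 : 2 ≤ i) : bent p z i j = -(p * z) := by
  simp only [bent]; split_ifs <;> first | rfl | omega

lemma bent_super (p z : ℝ) {i j : ℕ} (h : j = i + 1) (h0 : i ≠ 0) :
    bent p z i j = -((1 - p) * z) := by
  simp only [bent]; split_ifs <;> first | rfl | omega

lemma bent_zero (p z : ℝ) {i j : ℕ} (h0 : i ≠ 0) (h1 : i ≠ j) (h3 : j + 1 ≠ i)
    (h4 : j ≠ i + 1) : bent p z i j = 0 := by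
  simp only [bent]; split_ifs <;> first | rfl | omega

lemma Bm_apply (p z : ℝ) (k : ℕ) (i j : Fin (k + 1)) :
    Bm p z k i j = bent p z (i : ℕ) (j : ℕ) := by
  have hi := i.isLt
  have hj := j.isLt
  simp only [Bm, bent, Matrix.updateRow_apply, Matrix.sub_apply, Matrix.smul_apply,
    Matrix.one_apply, strongA, smul_eq_mul, Fin.ext_iff, Fin.val_zero]
  split_ifs <;> first | rfl | omega | ring

lemma succAbove_val {n : ℕ} (q : Fin (n + 1)) (i : Fin n) :
    ((q.succAbove i : Fin (n + 1)) : ℕ) = if (i : ℕ) < (q : ℕ) then (i : ℕ) else (i : ℕ) + 1 := by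
  rw [Fin.succAbove]
  split_ifs with h1 h2 h2
  · rfl
  · exact absurd (by simpa [Fin.lt_def] using h1) h2
  · exact absurd (by simp [Fin.lt_def, h2]) h1
  · rfl

lemma detT (p z : ℝ) (m : ℕ)
    (T : Matrix (Fin (m + 1)) (Fin (m + 1)) ℝ)
    (hT : ∀ i j : Fin (m + 1), T i j = bent p z ((i : ℕ) + 1) (j : ℕ)) :
    T.det = -z * (-(p * z)) ^ m := by
  rw [Matrix.det_of_upperTriangular]
  · have h0 : T 0 0 = -z := by
      rw [hT]; exact bent_sub1 p z (by simp) (by simp)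
    have hs : ∀ i : Fin m, T i.succ i.succ = -(p * z) := by
      intro i
      rw [hT]; exact bent_subp p z rfl (by rw [Fin.val_succ]; omega)
    rw [Fin.prod_univ_succ, h0]
    congr 1
    rw [Finset.prod_congr rfl (fun i _ => hs i), Finset.prod_const]
    simp
  · intro i j hij
    have hlt : (j : ℕ) < (i : ℕ) := hij
    rw [hT]; exact bent_zero p z (by omega) (by omega) (by omega) (by omega)

lemma detM (p z : ℝ) (m : ℕ)
    (M : Matrix (Fin (m + 2)) (Fin (m + 2)) ℝ)
    (hM : ∀ r c : Fin (m + 2),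
      M r c = bent p z (r : ℕ) (if (c : ℕ) < m + 1 then (c : ℕ) else (c : ℕ) + 1)) :
    M.det = p ^ m * z ^ (m + 1) - (1 - p) * z * (Bm p z m).det := by
  have hMlast : ∀ r : Fin (m + 2), M r (Fin.last (m + 1)) = bent p z (r : ℕ) (m + 2) := by
    intro r
    rw [hM]
    congr 1
    rw [Fin.val_last, if_neg (by omega)]
  rw [Matrix.det_succ_column M (Fin.last (m + 1))]
  set F := fun i : Fin (m + 2) => (-1 : ℝ) ^ ((i : ℕ) + ((Fin.last (m + 1) : Fin (m + 2)) : ℕ)) *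
      M i (Fin.last (m + 1)) *
      det (M.submatrix i.succAbove (Fin.last (m + 1)).succAbove) with hF
  have hzero : ∀ x ∈ (Finset.univ : Finset (Fin (m + 2))),
      x ∉ ({0, Fin.last (m + 1)} : Finset (Fin (m + 2))) → F x = 0 := by
    intro x _ hx
    simp only [Finset.mem_insert, Finset.mem_singleton, not_or] at hx
    have hx0 : (x : ℕ) ≠ 0 := fun h => hx.1 (Fin.ext h)
    have hxL : (x : ℕ) ≠ m + 1 := fun h => hx.2 (Fin.ext h)
    have hxlt := x.isLt
    have hMx : M x (Fin.last (m + 1)) = 0 := by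
      rw [hMlast]
      exact bent_zero p z (by omega) (by omega) (by omega) (by omega)
    rw [hF]
    simp only [hMx, mul_zero, zero_mul]
  rw [← Finset.sum_subset (Finset.subset_univ _) hzero,
    Finset.sum_pair (by simp [Fin.ext_iff] : (0 : Fin (m + 2)) ≠ Fin.last (m + 1))]
  have hM0 : M 0 (Fin.last (m + 1)) = 1 := by
    rw [hMlast]
    exact bent_row0 p z _
  have hML : M (Fin.last (m + 1)) (Fin.last (m + 1)) = -((1 - p) * z) := by
    rw [hMlast, Fin.val_last]
    exact bent_super p z rfl (by omega)
  have hminor0 : det (M.submatrix (0 : Fin (m + 2)).succAbove (Fin.last (m + 1)).succAbove) =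
      -z * (-(p * z)) ^ m := by
    apply detT
    intro r c
    have hc := c.isLt
    have h1 : (((0 : Fin (m + 2)).succAbove r : Fin (m + 2)) : ℕ) = (r : ℕ) + 1 := by
      rw [succAbove_val, Fin.val_zero, if_neg (by omega)]
    have h2 : (((Fin.last (m + 1)).succAbove c : Fin (m + 2)) : ℕ) = (c : ℕ) := by
      rw [succAbove_val, Fin.val_last, if_pos (by omega)]
    rw [Matrix.submatrix_apply, hM, h1, h2, if_pos (by omega)]
  have hminorL : M.submatrix (Fin.last (m + 1)).succAbove (Fin.last (m + 1)).succAbove =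
      Bm p z m := by
    ext r c
    have hc := c.isLt
    have hr := r.isLt
    have h1 : (((Fin.last (m + 1)).succAbove r : Fin (m + 2)) : ℕ) = (r : ℕ) := by
      rw [succAbove_val, Fin.val_last, if_pos (by omega)]
    have h2 : (((Fin.last (m + 1)).succAbove c : Fin (m + 2)) : ℕ) = (c : ℕ) := by
      rw [succAbove_val, Fin.val_last, if_pos (by omega)]
    rw [Matrix.submatrix_apply, hM, h1, h2, if_pos (by omega), Bm_apply]
  rw [hF]
  simp only [Fin.val_zero, Fin.val_last, hM0, hML, hminor0, hminorL]
  have h1 : ((-1 : ℝ)) ^ (0 + (m + 1)) * 1 * (-z * (-(p * z)) ^ m) = p ^ m * z ^ (m + 1) := by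
    have e1 : (-(p * z) : ℝ) ^ m = (-1) ^ m * (p * z) ^ m := by
      rw [← neg_one_mul, mul_pow]
    rw [e1, zero_add, pow_succ]
    have e2 : ((-1 : ℝ)) ^ m * (-1) ^ m = 1 := by rw [← mul_pow]; norm_num
    calc ((-1 : ℝ)) ^ m * -1 * 1 * (-z * ((-1) ^ m * (p * z) ^ m))
        = ((-1 : ℝ)) ^ m * (-1) ^ m * (z * (p * z) ^ m) := by ring
      _ = p ^ m * z ^ (m + 1) := by rw [e2, mul_pow, pow_succ]; ring
  have h2 : ((-1 : ℝ)) ^ ((m + 1) + (m + 1)) = 1 := by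
    rw [← two_mul, pow_mul]; norm_num
  rw [h1, h2]
  ring

lemma detB_rec (p z : ℝ) (m : ℕ) :
    (Bm p z (m + 2)).det =
      (Bm p z (m + 1)).det - p * (1 - p) * z ^ 2 * (Bm p z m).det
        + p ^ (m + 1) * z ^ (m + 2) := by
  have hjA : ((⟨m + 1, by omega⟩ : Fin (m + 3)) : ℕ) = m + 1 := rfl
  set jA : Fin (m + 3) := ⟨m + 1, by omega⟩ with hjAdef
  rw [Matrix.det_succ_row (Bm p z (m + 2)) (Fin.last (m + 2))]
  set F := fun j : Fin (m + 3) =>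
      (-1 : ℝ) ^ (((Fin.last (m + 2) : Fin (m + 3)) : ℕ) + (j : ℕ)) *
      Bm p z (m + 2) (Fin.last (m + 2)) j *
      det ((Bm p z (m + 2)).submatrix (Fin.last (m + 2)).succAbove j.succAbove) with hF
  have hzero : ∀ x ∈ (Finset.univ : Finset (Fin (m + 3))),
      x ∉ ({jA, Fin.last (m + 2)} : Finset (Fin (m + 3))) → F x = 0 := by
    intro x _ hx
    simp only [Finset.mem_insert, Finset.mem_singleton, not_or] at hx
    have hxA : (x : ℕ) ≠ m + 1 := fun h => hx.1 (Fin.ext (by rw [h, hjA]))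
    have hxB : (x : ℕ) ≠ m + 2 := fun h => hx.2 (Fin.ext (by rw [h, Fin.val_last]))
    have hxlt := x.isLt
    have hBx : Bm p z (m + 2) (Fin.last (m + 2)) x = 0 := by
      rw [Bm_apply, Fin.val_last]
      exact bent_zero p z (by omega) (by omega) (by omega) (by omega)
    rw [hF]
    simp only [hBx, mul_zero, zero_mul]
  rw [← Finset.sum_subset (Finset.subset_univ _) hzero,
    Finset.sum_pair (by simp [Fin.ext_iff, hjA] : jA ≠ Fin.last (m + 2))]
  have hBA : Bm p z (m + 2) (Fin.last (m + 2)) jA = -(p * z) := by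
    rw [Bm_apply, Fin.val_last, hjA]
    exact bent_subp p z rfl (by omega)
  have hBB : Bm p z (m + 2) (Fin.last (m + 2)) (Fin.last (m + 2)) = 1 := by
    rw [Bm_apply, Fin.val_last]
    exact bent_diag p z (by omega) rfl
  have hminorB :
      (Bm p z (m + 2)).submatrix (Fin.last (m + 2)).succAbove (Fin.last (m + 2)).succAbove =
      Bm p z (m + 1) := by
    ext r c
    have hr := r.isLt
    have hc := c.isLt
    have h1 : (((Fin.last (m + 2)).succAbove r : Fin (m + 3)) : ℕ) = (r : ℕ) := by
      rw [succAbove_val, Fin.val_last, if_pos (by omega)]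
    have h2 : (((Fin.last (m + 2)).succAbove c : Fin (m + 3)) : ℕ) = (c : ℕ) := by
      rw [succAbove_val, Fin.val_last, if_pos (by omega)]
    rw [Matrix.submatrix_apply, Bm_apply, h1, h2, Bm_apply]
  have hminorA :
      det ((Bm p z (m + 2)).submatrix (Fin.last (m + 2)).succAbove jA.succAbove) =
      p ^ m * z ^ (m + 1) - (1 - p) * z * (Bm p z m).det := by
    apply detM
    intro r c
    have hr := r.isLt
    have hc := c.isLt
    have h1 : (((Fin.last (m + 2)).succAbove r : Fin (m + 3)) : ℕ) = (r : ℕ) := by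
      rw [succAbove_val, Fin.val_last, if_pos (by omega)]
    have h2 : ((jA.succAbove c : Fin (m + 3)) : ℕ) =
        if (c : ℕ) < m + 1 then (c : ℕ) else (c : ℕ) + 1 := by
      rw [succAbove_val, hjA]
    rw [Matrix.submatrix_apply, Bm_apply, h1, h2]
  rw [hF]
  simp only [Fin.val_last, hjA, hBA, hBB, hminorA, hminorB]
  have hodd : ((-1 : ℝ)) ^ ((m + 2) + (m + 1)) = -1 :=
    Odd.neg_one_pow ⟨m + 1, by omega⟩
  have heven : ((-1 : ℝ)) ^ ((m + 2) + (m + 2)) = 1 :=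
    Even.neg_one_pow ⟨m + 2, by omega⟩
  rw [hodd, heven]
  ring

lemma Qdet_eq (p z : ℝ) (j : ℕ) : Qdet p z (j + 1) = (Bm p z j).det := by
  cases j with
  | zero =>
    rw [show Qdet p z 1 = 1 from rfl, Matrix.det_fin_one, Bm_apply]
    exact (bent_row0 p z 0).symm
  | succ n =>
    rw [show Qdet p z (n + 2) = ((1 - z • strongA p (n+1)).updateRow 0 (fun _ => 1)).det from rfl]
    rfl

/-- `Q_k(z) = Q_{k-1}(z) - p q z² Q_{k-2}(z) + p^{k-1} z^k` for all `k ≥ 1`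
(indices shifted by one: `Qdet p z (k+1) = Q_k(z)`). -/
theorem strong_Q_recursion (p q : ℝ) (hp0 : 0 < p) (hp : p < 1 / 2) (hq : q = 1 - p)
    (z : ℝ) :
    ∀ k : ℕ, 1 ≤ k →
      Qdet p z (k + 1) =
        Qdet p z k - p * q * z ^ 2 * Qdet p z (k - 1) + p ^ (k - 1) * z ^ k := by
  intro k hk
  match k with
  | 1 =>
    rw [show Qdet p z 0 = 0 from rfl, show Qdet p z 1 = 1 from rfl, Qdet_eq,
      Matrix.det_fin_two]
    rw [Bm_apply, Bm_apply, Bm_apply, Bm_apply]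
    rw [show ((0 : Fin 2) : ℕ) = 0 from rfl, show ((1 : Fin 2) : ℕ) = 1 from rfl]
    rw [bent_row0, bent_row0, bent_diag p z (by omega) rfl, bent_sub1 p z rfl rfl]
    ring
  | (m + 2) =>
    rw [show m + 2 - 1 = m + 1 from rfl, show m + 2 + 1 = m + 3 from rfl]
    rw [Qdet_eq, Qdet_eq, Qdet_eq, hq]
    exact detB_rec p z m
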